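/- Elasticity bound for simple graphs: Let G = (V,E,r) be a simple graph (i.e., r is injective, so there is at most one edge between any two vertices), let m ≥ 1, and suppose that every connected component of G has at most m vertices (i.e., for every vertex v, the set of vertices joined to v by a walk of edges, including v itself, has cardinality at most m). If an element a ∈ A(G) can be written both as a sum of k atoms and as a sum of l atoms, with k ≥ 1, then l·m ≤ (m² − 2m + 2)·k. (In other words, the elasticity of A(G) is at most m − 2 + 2/m.) -/

import Mathlib

/-- An agglomeration on the graph given by `r : E → Sym2 V`. -/
def IsAgg {V E : Type*} (r : E → Sym2 V) (a : (V → ℕ) × (E → ℕ)) : Prop :=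
  ∀ (e : E) (v : V), v ∈ r e → a.2 e ≤ a.1 v

/-- An atom of the monoid of agglomerations. -/
def IsAtomAgg {V E : Type*} (r : E → Sym2 V) (a : (V → ℕ) × (E → ℕ)) : Prop :=
  IsAgg r a ∧ a ≠ 0 ∧
    ∀ b c : (V → ℕ) × (E → ℕ), IsAgg r b → IsAgg r c → a = b + c → b = 0 ∨ c = 0

/-- `AggJoined r E' x y`: `x` and `y` are joined by a walk using only edges in `E'`. -/
def AggJoined {V E : Type*} (r : E → Sym2 V) (E' : Set E) : V → V → Prop :=
  Relation.ReflTransGen (fun x y => ∃ e ∈ E', r e = s(x, y))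

section Aux

variable {V E : Type*}

/-- `n`-step reachability. -/
def StepN (R : V → V → Prop) : ℕ → V → V → Prop
  | 0 => Eq
  | n + 1 => fun x y => ∃ z, StepN R n x z ∧ R z y

lemma reflTransGen_iff_stepN {R : V → V → Prop} {x y : V} :
    Relation.ReflTransGen R x y ↔ ∃ n, StepN R n x y := by
  constructor
  · intro h
    induction h with
    | refl => exact ⟨0, rfl⟩
    | tail _ h ih => obtain ⟨n, hn⟩ := ih; exact ⟨n + 1, _, hn, h⟩
  · rintro ⟨n, h⟩
    induction n generalizing y with
    | zero => cases h; exact .refl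
    | succ n ih => obtain ⟨z, hz, hzy⟩ := h; exact (ih hz).tail hzy

/-- A connected reachability set has at most (number of incident edges) + 1 vertices. -/
lemma card_reach_le [Fintype V] (r : E → Sym2 V) (p : E → Prop) (v₀ : V)
    (W : Finset V) (F : Finset E)
    (hW : ∀ w, w ∈ W ↔ Relation.ReflTransGen (fun x y => ∃ e, p e ∧ r e = s(x, y)) v₀ w)
    (hF : ∀ e, p e → (∃ v, v ∈ r e ∧ v ∈ W) → e ∈ F) :
    W.card ≤ F.card + 1 := by
  classical
  set Rel : V → V → Prop := fun x y => ∃ e, p e ∧ r e = s(x, y) with hRel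
  -- distance function
  set d : V → ℕ := fun w => if h : ∃ n, StepN Rel n v₀ w then Nat.find h else 0 with hd
  -- key: every reachable vertex other than v₀ has a "parent" edge
  have key : ∀ w ∈ W, w ≠ v₀ → ∃ e, p e ∧ ∃ z, r e = s(z, w) ∧ d z < d w := by
    intro w hw hne
    have hreach : ∃ n, StepN Rel n v₀ w := reflTransGen_iff_stepN.mp ((hW w).mp hw)
    have hdw : d w = Nat.find hreach := by simp [hd, hreach]
    have hspec : StepN Rel (Nat.find hreach) v₀ w := Nat.find_spec hreach
    have hpos : Nat.find hreach ≠ 0 := by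
      intro h0
      rw [h0] at hspec
      exact hne hspec.symm
    obtain ⟨n, hn⟩ : ∃ n, Nat.find hreach = n + 1 := ⟨Nat.find hreach - 1, by omega⟩
    rw [hn] at hspec
    obtain ⟨z, hz, e, hpe, hre⟩ := hspec
    refine ⟨e, hpe, z, hre, ?_⟩
    have hzr : ∃ n', StepN Rel n' v₀ z := ⟨n, hz⟩
    have hdz : d z = Nat.find hzr := by simp [hd, hzr]
    have : Nat.find hzr ≤ n := Nat.find_min' hzr hz
    omega
  -- the case W.card ≤ 1 is trivial
  rcases le_or_gt W.card 1 with h1 | h1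
  · omega
  -- otherwise pick a default edge
  have : ∃ w ∈ W, w ≠ v₀ := by
    by_contra hcon
    push_neg at hcon
    have : W ⊆ {v₀} := by intro w hw; simp [hcon w hw]
    have := Finset.card_le_card this
    simp at this
    omega
  obtain ⟨w₁, hw₁, hw₁ne⟩ := this
  obtain ⟨edef, -⟩ := key w₁ hw₁ hw₁ne
  set f : V → E := fun w =>
    if h : ∃ e, p e ∧ ∃ z, r e = s(z, w) ∧ d z < d w then h.choose else edef with hf
  have hcard : (W.erase v₀).card ≤ F.card := by
    apply Finset.card_le_card_of_injOn f
    · intro w hw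
      rw [Finset.mem_coe, Finset.mem_erase] at hw
      obtain ⟨hne, hwW⟩ := hw
      have hkey := key w hwW hne
      have hspec := hkey.choose_spec
      obtain ⟨hpe, z, hre, -⟩ := hspec
      have : f w = hkey.choose := by simp [hf, hkey]
      rw [this]
      exact hF _ hpe ⟨w, by rw [hre]; exact Sym2.mem_mk_right _ _, hwW⟩
    · intro w hw w' hw' heq
      simp only [Finset.coe_erase, Set.mem_diff, Finset.mem_coe, Set.mem_singleton_iff] at hw hw'
      by_contra hne
      have hkey := key w hw.1 hw.2
      have hkey' := key w' hw'.1 hw'.2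
      have hfw : f w = hkey.choose := by simp [hf, hkey]
      have hfw' : f w' = hkey'.choose := by simp [hf, hkey']
      obtain ⟨-, z, hre, hdz⟩ := hkey.choose_spec
      obtain ⟨-, z', hre', hdz'⟩ := hkey'.choose_spec
      rw [hfw, hfw'] at heq
      rw [heq] at hre
      rw [hre'] at hre
      rw [Sym2.eq_iff] at hre
      rcases hre with ⟨h1, h2⟩ | ⟨h1, h2⟩
      · exact hne h2.symm
      · subst h1; subst h2; omega
  by_cases hv : v₀ ∈ W
  · have := Finset.card_erase_of_mem hv
    omega
  · rw [Finset.erase_eq_of_notMem hv] at hcard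
    omega

/-- In a simple graph, twice the number of edges inside a vertex set `W` is at most
`|W|² - |W|`. -/
lemma two_mul_card_edges_le [Fintype V] (r : E → Sym2 V)
    (hr : ∀ e : E, ¬ (r e).IsDiag) (hsimple : Function.Injective r)
    (W : Finset V) (F : Finset E) (hF : ∀ e ∈ F, ∀ v ∈ r e, v ∈ W) :
    2 * F.card + W.card ≤ W.card * W.card := by
  classical
  have hex : ∀ e : E, ∃ xy : V × V, r e = s(xy.1, xy.2) := by
    intro e
    induction (r e) using Sym2.ind with
    | _ x y => exact ⟨(x, y), rfl⟩
  choose xy hxy using hex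
  set g : E × Bool → V × V := fun q =>
    if q.2 then ((xy q.1).1, (xy q.1).2) else ((xy q.1).2, (xy q.1).1) with hg
  have hcard : (F ×ˢ (Finset.univ : Finset Bool)).card ≤ W.offDiag.card := by
    apply Finset.card_le_card_of_injOn g
    · rintro ⟨e, i⟩ hq
      rw [Finset.mem_coe, Finset.mem_product] at hq
      have hmem1 : (xy e).1 ∈ W := hF e hq.1 _ (by rw [hxy e]; exact Sym2.mem_mk_left _ _)
      have hmem2 : (xy e).2 ∈ W := hF e hq.1 _ (by rw [hxy e]; exact Sym2.mem_mk_right _ _)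
      have hne : (xy e).1 ≠ (xy e).2 := by
        intro h
        exact hr e (by rw [hxy e]; exact Sym2.mk_isDiag_iff.mpr h)
      rcases i with _ | _ <;> simp [hg, Finset.mem_offDiag, hmem1, hmem2, hne, Ne.symm hne]
    · rintro ⟨e, i⟩ - ⟨e', i'⟩ - heq
      have hee' : e = e' := by
        apply hsimple
        rw [hxy e, hxy e']
        rcases i with _ | _ <;> rcases i' with _ | _ <;>
          simp only [hg, if_true, if_false, Bool.false_eq_true, Prod.mk.injEq] at heq <;>
          rw [heq.1, heq.2] <;> first | rfl | exact Sym2.eq_swap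
      subst hee'
      have hne : (xy e).1 ≠ (xy e).2 := by
        intro h
        exact hr e (by rw [hxy e]; exact Sym2.mk_isDiag_iff.mpr h)
      rcases i with _ | _ <;> rcases i' with _ | _ <;>
        simp only [hg, if_true, if_false, Bool.false_eq_true, Prod.mk.injEq] at heq ⊢ <;>
        first | rfl | (exact absurd heq.1 hne) | (exact absurd heq.1 (Ne.symm hne))
  rw [Finset.card_product, Finset.card_univ, Fintype.card_bool, Finset.offDiag_card] at hcard
  rcases Nat.eq_zero_or_pos W.card with h0 | hpos
  · rw [h0] at hcard ⊢; omega
  · have : W.card ≤ W.card * W.card := Nat.le_mul_of_pos_left _ hpos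
    omega

/-- The three key per-atom bounds. -/
lemma atom_bounds [Fintype V] [Fintype E] (r : E → Sym2 V)
    (hr : ∀ e : E, ¬ (r e).IsDiag) (hsimple : Function.Injective r)
    (m : ℕ) (hm : 1 ≤ m)
    (hcomp : ∀ v : V, Nat.card {w : V // AggJoined r Set.univ v w} ≤ m)
    (b : (V → ℕ) × (E → ℕ)) (hb : IsAtomAgg r b) :
    (∑ v, b.1 v) ≤ m ∧ (∑ v, b.1 v) ≤ (∑ e, b.2 e) + 1 ∧
      2 * (∑ e, b.2 e) + m ≤ m * (∑ v, b.1 v) := by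
  classical
  obtain ⟨hagg, hne0, hatom⟩ := hb
  by_cases hE : ∀ e, b.2 e = 0
  · -- no edges: b is a single-vertex atom δ_v
    have hVne : ∃ v, 1 ≤ b.1 v := by
      by_contra hcon
      push_neg at hcon
      apply hne0
      ext x
      · simpa using Nat.lt_one_iff.mp (hcon x)
      · exact hE x
    obtain ⟨v, hv⟩ := hVne
    set δ : (V → ℕ) × (E → ℕ) := (fun w => if w = v then 1 else 0, 0) with hδ
    set c : (V → ℕ) × (E → ℕ) := (fun w => b.1 w - (if w = v then 1 else 0), b.2) with hc
    have hδagg : IsAgg r δ := by intro e u _; simp [hδ]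
    have hcagg : IsAgg r c := by intro e u _; simp [hc, hE e]
    have hsum : b = δ + c := by
      ext x
      · by_cases hx : x = v <;> simp [hδ, hc, hx] <;> omega
      · simp [hδ, hc]
    rcases hatom δ c hδagg hcagg hsum with h | h
    · exfalso
      have := congrFun (congrArg Prod.fst h) v
      simp [hδ] at this
    · have hb1 : ∀ w, b.1 w = if w = v then 1 else 0 := by
        intro w
        have := congrFun (congrArg Prod.fst h) w
        simp only [hc, Prod.fst_zero, Pi.zero_apply] at this
        by_cases hw : w = v <;> simp [hw] at this ⊢ <;> omega
      have hS : (∑ w, b.1 w) = 1 := by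
        simp only [hb1]
        simp
      have hT : (∑ e, b.2 e) = 0 := by simp [hE]
      rw [hS, hT]
      refine ⟨hm, by omega, by omega⟩
  · -- there is an edge
    push_neg at hE
    obtain ⟨e₀, he₀⟩ := hE
    have he₀1 : 1 ≤ b.2 e₀ := Nat.one_le_iff_ne_zero.mpr he₀
    obtain ⟨x₀, y₀, hxy₀⟩ : ∃ x y, r e₀ = s(x, y) := by
      induction (r e₀) using Sym2.ind with
      | _ x y => exact ⟨x, y, rfl⟩
    set Rel : V → V → Prop := fun x y => ∃ e, 1 ≤ b.2 e ∧ r e = s(x, y) with hRel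
    set Reach : V → Prop := fun w => Relation.ReflTransGen Rel x₀ w with hReach
    have hx₀r : x₀ ∈ r e₀ := by rw [hxy₀]; exact Sym2.mem_mk_left _ _
    have hreach₀ : Reach x₀ := Relation.ReflTransGen.refl
    -- closure: any edge with positive multiplicity with one endpoint reachable has
    -- all endpoints reachable
    have hWclose : ∀ e, 1 ≤ b.2 e → ∀ x, x ∈ r e → Reach x → ∀ v, v ∈ r e → Reach v := by
      intro e he x hx hrx v hv
      by_cases hxv : x = v
      · rwa [hxv] at hrx
      · have : r e = s(x, v) := (Sym2.mem_and_mem_iff hxv).mp ⟨hx, hv⟩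
        exact hrx.tail ⟨e, he, this⟩
    -- reachable vertices have positive multiplicity
    have hWb : ∀ w, Reach w → 1 ≤ b.1 w := by
      intro w hw
      induction hw with
      | refl => exact le_trans he₀1 (hagg e₀ x₀ hx₀r)
      | tail _ h _ =>
        obtain ⟨e, he, hre⟩ := h
        exact le_trans he (hagg e _ (by rw [hre]; exact Sym2.mem_mk_right _ _))
    set u : (V → ℕ) × (E → ℕ) :=
      (fun v => if Reach v then 1 else 0,
       fun e => if 1 ≤ b.2 e ∧ ∃ x, x ∈ r e ∧ Reach x then 1 else 0) with hu
    set c : (V → ℕ) × (E → ℕ) :=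
      (fun v => b.1 v - u.1 v, fun e => b.2 e - u.2 e) with hc
    have huagg : IsAgg r u := by
      intro e v hv
      simp only [hu]
      by_cases h2 : 1 ≤ b.2 e ∧ ∃ x, x ∈ r e ∧ Reach x
      · obtain ⟨he, x, hx, hrx⟩ := h2
        have hrv : Reach v := hWclose e he x hx hrx v hv
        rw [if_pos ⟨he, x, hx, hrx⟩, if_pos hrv]
      · rw [if_neg h2]; omega
    have hcagg : IsAgg r c := by
      intro e v hv
      simp only [hc, hu]
      by_cases h2 : 1 ≤ b.2 e ∧ ∃ x, x ∈ r e ∧ Reach x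
      · obtain ⟨he, x, hx, hrx⟩ := h2
        have hrv : Reach v := hWclose e he x hx hrx v hv
        rw [if_pos ⟨he, x, hx, hrx⟩, if_pos hrv]
        exact Nat.sub_le_sub_right (hagg e v hv) 1
      · rw [if_neg h2]
        by_cases hrv : Reach v
        · have hbe : b.2 e = 0 := by
            by_contra hb0
            exact h2 ⟨Nat.one_le_iff_ne_zero.mpr hb0, v, hv, hrv⟩
          simp [hbe]
        · rw [if_neg hrv]
          simpa using hagg e v hv
    have hule : (∀ v, u.1 v ≤ b.1 v) ∧ (∀ e, u.2 e ≤ b.2 e) := by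
      constructor
      · intro v
        by_cases hrv : Reach v
        · have h3 : u.1 v = 1 := by simp only [hu]; rw [if_pos hrv]
          rw [h3]; exact hWb v hrv
        · have h3 : u.1 v = 0 := by simp only [hu]; rw [if_neg hrv]
          rw [h3]; omega
      · intro e
        by_cases h2 : 1 ≤ b.2 e ∧ ∃ x, x ∈ r e ∧ Reach x
        · simp only [hu]; rw [if_pos h2]; exact h2.1
        · simp only [hu]; rw [if_neg h2]; omega
    have hsum : b = u + c := by
      ext x
      · show b.1 x = u.1 x + c.1 x
        have h5 : c.1 x = b.1 x - u.1 x := rfl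
        have h6 := hule.1 x
        omega
      · show b.2 x = u.2 x + c.2 x
        have h5 : c.2 x = b.2 x - u.2 x := rfl
        have h6 := hule.2 x
        omega
    rcases hatom u c huagg hcagg hsum with h | h
    · exfalso
      have := congrFun (congrArg Prod.fst h) x₀
      simp [hu, hreach₀] at this
    · -- b = u
      have hbu : b = u := by rw [hsum, h, add_zero]
      set Wf : Finset V := Finset.univ.filter Reach with hWf
      set Ff : Finset E := Finset.univ.filter
        (fun e => 1 ≤ b.2 e ∧ ∃ x, x ∈ r e ∧ Reach x) with hFf
      have hS : (∑ v, b.1 v) = Wf.card := by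
        rw [hbu]
        simp only [hu]
        rw [hWf, Finset.card_filter]
      have hT : (∑ e, b.2 e) = Ff.card := by
        rw [hbu]
        simp only [hu]
        rw [hFf, Finset.card_filter]
      -- bound (A): Wf.card ≤ m
      have hA : Wf.card ≤ m := by
        have hsub : Wf ⊆ Finset.univ.filter (fun w => AggJoined r Set.univ x₀ w) := by
          intro w hw
          rw [hWf, Finset.mem_filter] at hw
          rw [Finset.mem_filter]
          refine ⟨Finset.mem_univ _, ?_⟩
          exact Relation.ReflTransGen.mono (r := Rel)
            (fun x y hxy => by obtain ⟨e, -, hre⟩ := hxy; exact ⟨e, Set.mem_univ _, hre⟩) _ _ hw.2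
        have := Finset.card_le_card hsub
        have hcard : Nat.card {w : V // AggJoined r Set.univ x₀ w} =
            (Finset.univ.filter (fun w => AggJoined r Set.univ x₀ w)).card := by
          rw [Nat.card_eq_fintype_card, Fintype.card_subtype]
        have := hcomp x₀
        omega
      -- bound (B): Wf.card ≤ Ff.card + 1
      have hB : Wf.card ≤ Ff.card + 1 := by
        apply card_reach_le r (fun e => 1 ≤ b.2 e) x₀ Wf Ff
        · intro w
          rw [hWf, Finset.mem_filter]
          simp [hReach, hRel]
        · intro e hpe ⟨v, hv, hvW⟩
          rw [hWf, Finset.mem_filter] at hvW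
          rw [hFf, Finset.mem_filter]
          exact ⟨Finset.mem_univ _, hpe, v, hv, hvW.2⟩
      -- bound (C): 2 * Ff.card + Wf.card ≤ Wf.card * Wf.card
      have hC : 2 * Ff.card + Wf.card ≤ Wf.card * Wf.card := by
        apply two_mul_card_edges_le r hr hsimple
        intro e he v hv
        rw [hFf, Finset.mem_filter] at he
        obtain ⟨-, he1, x, hx, hrx⟩ := he
        rw [hWf, Finset.mem_filter]
        exact ⟨Finset.mem_univ _, hWclose e he1 x hx hrx v hv⟩
      have hW1 : 1 ≤ Wf.card := by
        have : x₀ ∈ Wf := by rw [hWf, Finset.mem_filter]; exact ⟨Finset.mem_univ _, hreach₀⟩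
        exact Finset.card_pos.mpr ⟨x₀, this⟩
      rw [hS, hT]
      refine ⟨hA, hB, ?_⟩
      -- 2T + m ≤ m * S  from  2T + S ≤ S², 1 ≤ S ≤ m
      zify at hC hA hW1 ⊢
      nlinarith [mul_nonneg (sub_nonneg.mpr hA) (sub_nonneg.mpr hW1)]

end Aux

/-- **Elasticity bound for simple graphs**: if `G` is simple and every connected component
of `G` has at most `m` vertices, and `a ∈ A(G)` is both a sum of `k ≥ 1` atoms and a sum
of `l` atoms, then `l·m ≤ (m² − 2m + 2)·k`; i.e. `ρ(A(G)) ≤ m − 2 + 2/m`. -/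
theorem elasticity_bound_simple {V E : Type*} [Fintype V] [Fintype E]
    (r : E → Sym2 V) (hr : ∀ e : E, ¬ (r e).IsDiag)
    (hsimple : Function.Injective r)
    (m : ℕ) (hm : 1 ≤ m)
    (hcomp : ∀ v : V, Nat.card {w : V // AggJoined r Set.univ v w} ≤ m)
    (a : (V → ℕ) × (E → ℕ)) (ha : IsAgg r a)
    (k l : ℕ) (hk : 1 ≤ k)
    (hka : ∃ b : Fin k → (V → ℕ) × (E → ℕ), (∀ i, IsAtomAgg r (b i)) ∧ a = ∑ i, b i)
    (hla : ∃ c : Fin l → (V → ℕ) × (E → ℕ), (∀ i, IsAtomAgg r (c i)) ∧ a = ∑ i, c i) :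
    l * m ≤ (m * m + 2 - 2 * m) * k := by
  classical
  obtain ⟨b, hb, hbsum⟩ := hka
  obtain ⟨c, hc, hcsum⟩ := hla
  set S : ℕ := ∑ v, a.1 v with hSdef
  set T : ℕ := ∑ e, a.2 e with hTdef
  have hSb : S = ∑ i, ∑ v, (b i).1 v := by
    rw [hSdef, hbsum, Prod.fst_sum]
    rw [Finset.sum_comm]
    simp [Finset.sum_apply]
  have hTb : T = ∑ i, ∑ e, (b i).2 e := by
    rw [hTdef, hbsum, Prod.snd_sum]
    rw [Finset.sum_comm]
    simp [Finset.sum_apply]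
  have hSc : S = ∑ i, ∑ v, (c i).1 v := by
    rw [hSdef, hcsum, Prod.fst_sum]
    rw [Finset.sum_comm]
    simp [Finset.sum_apply]
  have hTc : T = ∑ i, ∑ e, (c i).2 e := by
    rw [hTdef, hcsum, Prod.snd_sum]
    rw [Finset.sum_comm]
    simp [Finset.sum_apply]
  have hbB := fun i => atom_bounds r hr hsimple m hm hcomp (b i) (hb i)
  have hcB := fun i => atom_bounds r hr hsimple m hm hcomp (c i) (hc i)
  -- (i) S ≤ k * m
  have h1 : S ≤ k * m := by
    rw [hSb]
    calc ∑ i, ∑ v, (b i).1 v ≤ ∑ _i : Fin k, m := Finset.sum_le_sum fun i _ => (hbB i).1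
    _ = k * m := by simp [Finset.sum_const, mul_comm]
  -- (ii) S ≤ T + k
  have h2 : S ≤ T + k := by
    rw [hSb, hTb]
    calc ∑ i, ∑ v, (b i).1 v ≤ ∑ i, ((∑ e, (b i).2 e) + 1) :=
          Finset.sum_le_sum fun i _ => (hbB i).2.1
    _ = (∑ i, ∑ e, (b i).2 e) + k := by rw [Finset.sum_add_distrib]; simp
  -- (iii) l * m + 2 * T ≤ m * S
  have h3 : l * m + 2 * T ≤ m * S := by
    rw [hSc, hTc]
    calc l * m + 2 * (∑ i, ∑ e, (c i).2 e)
        = ∑ i : Fin l, (2 * (∑ e, (c i).2 e) + m) := by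
          rw [Finset.sum_add_distrib, Finset.mul_sum]
          simp [mul_comm]
          ring
    _ ≤ ∑ i, m * (∑ v, (c i).1 v) := Finset.sum_le_sum fun i _ => (hcB i).2.2
    _ = m * ∑ i, ∑ v, (c i).1 v := by rw [Finset.mul_sum]
  -- combine
  match m, hm with
  | 1, _ =>
    have : l ≤ S := by omega
    simpa using le_trans this (by simpa using h1)
  | (m' + 2), _ =>
    have hMM : (m' + 2) * (m' + 2) + 2 - 2 * (m' + 2) = m' * m' + 2 * m' + 2 := by
      have h : (m' + 2) * (m' + 2) + 2 = (m' * m' + 2 * m' + 2) + 2 * (m' + 2) := by ring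
      rw [h, Nat.add_sub_cancel]
    rw [hMM]
    have hmul : m' * S ≤ m' * (k * (m' + 2)) := Nat.mul_le_mul_left m' h1
    nlinarith [h2, h3, hmul]
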